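/- Let f be analytic on the unit disk with f(0) = 0, f'(0) = 1, and |f'(z) − 1| < 1 for all |z| < 1. Then f is convex in the disk {z : |z| < 1/2}, i.e. Re(1 + z f''(z)/f'(z)) > 0 for |z| < 1/2. -/

import Mathlib

open Metric Set Complex

noncomputable def mob (a w : ℂ) : ℂ := (w + a) / (1 + (starRingEnd ℂ) a * w)

lemma mob_denom_ne {a w : ℂ} (ha : ‖a‖ < 1) (hw : ‖w‖ < 1) :
    (1 : ℂ) + (starRingEnd ℂ) a * w ≠ 0 := by
  intro h
  have h1 : (starRingEnd ℂ) a * w = -1 := by linear_combination h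
  have h2 : ‖(starRingEnd ℂ) a * w‖ = 1 := by rw [h1]; simp
  rw [norm_mul, Complex.norm_conj] at h2
  nlinarith [norm_nonneg a, norm_nonneg w]

lemma mob_normSq_key (a w : ℂ) :
    Complex.normSq (w + a) + (1 - Complex.normSq a) * (1 - Complex.normSq w)
      = Complex.normSq (1 + (starRingEnd ℂ) a * w) := by
  simp only [Complex.normSq_apply, Complex.add_re, Complex.add_im, Complex.mul_re,
    Complex.mul_im, Complex.one_re, Complex.one_im, Complex.conj_re, Complex.conj_im]
  ring

lemma mob_maps {a w : ℂ} (ha : ‖a‖ < 1) (hw : ‖w‖ < 1) :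
    ‖mob a w‖ < 1 := by
  have hd := mob_denom_ne ha hw
  have key := mob_normSq_key a w
  have hna : Complex.normSq a < 1 := by rw [← Complex.sq_norm]; nlinarith [norm_nonneg a]
  have hnw : Complex.normSq w < 1 := by rw [← Complex.sq_norm]; nlinarith [norm_nonneg w]
  have hlt : Complex.normSq (w + a) < Complex.normSq (1 + (starRingEnd ℂ) a * w) := by
    nlinarith
  rw [← Complex.sq_norm, ← Complex.sq_norm] at hlt
  have habs : ‖w + a‖ < ‖1 + (starRingEnd ℂ) a * w‖ :=
    lt_of_pow_lt_pow_left₀ 2 (norm_nonneg _) hlt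
  rw [mob, norm_div, div_lt_one]
  · exact habs
  · exact (norm_pos_iff.mpr hd)

lemma mob_hasDerivAt {a w : ℂ} (ha : ‖a‖ < 1) (hw : ‖w‖ < 1) :
    HasDerivAt (mob a) ((1 - (Complex.normSq a : ℂ)) / (1 + (starRingEnd ℂ) a * w) ^ 2) w := by
  have hd := mob_denom_ne ha hw
  have hu : HasDerivAt (fun y : ℂ => y + a) 1 w := (hasDerivAt_id w).add_const a
  have hv : HasDerivAt (fun y : ℂ => 1 + (starRingEnd ℂ) a * y) ((starRingEnd ℂ) a) w := by
    simpa using ((hasDerivAt_id w).const_mul ((starRingEnd ℂ) a)).const_add 1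
  have := hu.div hv hd
  have hnum : (1 : ℂ) - (Complex.normSq a : ℂ)
      = 1 * (1 + (starRingEnd ℂ) a * w) - (w + a) * (starRingEnd ℂ) a := by
    rw [← Complex.mul_conj]; ring
  rw [← hnum] at this
  exact this

lemma schwarz_pick {g : ℂ → ℂ} (hd : DifferentiableOn ℂ g (ball 0 1))
    (hm : MapsTo g (ball 0 1) (ball 0 1)) {z : ℂ} (hz : ‖z‖ < 1) :
    ‖deriv g z‖ * (1 - ‖z‖ ^ 2) ≤ 1 - ‖g z‖ ^ 2 := by
  set a := g z with ha_def
  have hza : z ∈ ball (0 : ℂ) 1 := by simpa [mem_ball, Complex.dist_eq] using hz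
  have ha : ‖a‖ < 1 := by
    have := hm hza; simpa [mem_ball, Complex.dist_eq] using this
  have ha' : ‖-a‖ < 1 := by simpa using ha
  set h : ℂ → ℂ := fun w => mob (-a) (g (mob z w)) with hh_def
  -- differentiability and mapping of h
  have hmobz_diff : ∀ w ∈ ball (0:ℂ) 1, DifferentiableAt ℂ (mob z) w := fun w hw =>
    (mob_hasDerivAt hz (by simpa [mem_ball, Complex.dist_eq] using hw)).differentiableAt
  have hmoba_diff : ∀ w ∈ ball (0:ℂ) 1, DifferentiableAt ℂ (mob (-a)) w := fun w hw =>
    (mob_hasDerivAt ha' (by simpa [mem_ball, Complex.dist_eq] using hw)).differentiableAt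
  have hmobz_maps : MapsTo (mob z) (ball (0:ℂ) 1) (ball (0:ℂ) 1) := fun w hw => by
    simpa [mem_ball, Complex.dist_eq] using mob_maps hz (by simpa [mem_ball, Complex.dist_eq] using hw)
  have hmoba_maps : MapsTo (mob (-a)) (ball (0:ℂ) 1) (ball (0:ℂ) 1) := fun w hw => by
    simpa [mem_ball, Complex.dist_eq] using mob_maps ha' (by simpa [mem_ball, Complex.dist_eq] using hw)
  have hdiff : DifferentiableOn ℂ h (ball 0 1) := by
    intro w hw
    have h1 := (hmobz_diff w hw)
    have h2 := (hd _ (hmobz_maps hw)).differentiableAt (isOpen_ball.mem_nhds (hmobz_maps hw))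
    have h3 := (hmoba_diff _ (hm (hmobz_maps hw)))
    exact (DifferentiableAt.comp w h3 (DifferentiableAt.comp w h2 h1)).differentiableWithinAt
  have hmaps : MapsTo h (ball (0:ℂ) 1) (ball (0:ℂ) 1) := fun w hw =>
    hmoba_maps (hm (hmobz_maps hw))
  have hmobz0 : mob z 0 = z := by simp [mob]
  have h0 : h 0 = 0 := by
    simp only [hh_def, hmobz0, ← ha_def, mob]
    simp
    left; rw [ha_def]; ring
  -- derivative of h at 0
  have hga : ‖g z‖ < 1 := ha
  have hD1 : HasDerivAt (mob z) (1 - (Complex.normSq z : ℂ)) 0 := by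
    have := mob_hasDerivAt hz (show ‖(0:ℂ)‖ < 1 by simp)
    simpa using this
  have hD2 : HasDerivAt g (deriv g z) z :=
    ((hd z hza).differentiableAt (isOpen_ball.mem_nhds hza)).hasDerivAt
  have hD3 : HasDerivAt (mob (-a))
      ((1 - (Complex.normSq a : ℂ)) / (1 + (starRingEnd ℂ) (-a) * a) ^ 2) a := by
    have := mob_hasDerivAt ha' ha
    simpa using this
  have hden : (1 : ℂ) + (starRingEnd ℂ) (-a) * a = 1 - (Complex.normSq a : ℂ) := by
    rw [map_neg, ← Complex.mul_conj]; ring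
  rw [hden] at hD3
  have hD2' : HasDerivAt g (deriv g z) (mob z 0) := by rw [hmobz0]; exact hD2
  have hD3' : HasDerivAt (mob (-a))
      ((1 - (Complex.normSq a : ℂ)) / (1 - (Complex.normSq a : ℂ)) ^ 2) (g (mob z 0)) := by
    rw [hmobz0]; exact hD3
  have hDh : HasDerivAt h
      ((1 - (Complex.normSq a : ℂ)) / (1 - (Complex.normSq a : ℂ)) ^ 2 *
        (deriv g z * (1 - (Complex.normSq z : ℂ)))) 0 :=
    by rw [hh_def]; exact HasDerivAt.comp 0 hD3' (HasDerivAt.comp 0 hD2' hD1)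
  -- Schwarz lemma for h
  have hsch := Complex.norm_deriv_le_div_of_mapsTo_ball hdiff (by rw [h0]; exact hmaps.mono_right ball_subset_closedBall) one_pos
  rw [hDh.deriv] at hsch
  -- simplify
  have hnsa : Complex.normSq a < 1 := by rw [← Complex.sq_norm]; nlinarith [norm_nonneg a]
  have hnsa0 : (0:ℝ) ≤ Complex.normSq a := Complex.normSq_nonneg a
  have hnsz : Complex.normSq z < 1 := by rw [← Complex.sq_norm]; nlinarith [norm_nonneg z]
  have hnsz0 : (0:ℝ) ≤ Complex.normSq z := Complex.normSq_nonneg z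
  rw [norm_mul, norm_mul, norm_div] at hsch
  have e1 : ‖1 - (Complex.normSq a : ℂ)‖ = 1 - Complex.normSq a := by
    rw [← Complex.ofReal_one, ← Complex.ofReal_sub, Complex.norm_real, Real.norm_eq_abs]
    exact abs_of_nonneg (by linarith)
  have e2 : ‖1 - (Complex.normSq z : ℂ)‖ = 1 - Complex.normSq z := by
    rw [← Complex.ofReal_one, ← Complex.ofReal_sub, Complex.norm_real, Real.norm_eq_abs]
    exact abs_of_nonneg (by linarith)
  rw [norm_pow, e1, e2] at hsch
  have hfin : ‖deriv g z‖ * (1 - Complex.normSq z) ≤ 1 - Complex.normSq a := by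
    have h1a : (0:ℝ) < 1 - Complex.normSq a := by linarith
    rw [div_mul_eq_mul_div, div_le_iff₀ (by positivity)] at hsch
    nlinarith [norm_nonneg (deriv g z)]
  rw [← Complex.sq_norm z, ← Complex.sq_norm a] at hfin
  exact hfin

theorem convex_half_disk_criterion (f : ℂ → ℂ)
    (hf : AnalyticOn ℂ f (Metric.ball (0 : ℂ) 1))
    (hf0 : f 0 = 0) (hf1 : deriv f 0 = 1)
    (hbound : ∀ z : ℂ, ‖z‖ < 1 → ‖deriv f z - 1‖ < 1) :
    ∀ z : ℂ, ‖z‖ < 1 / 2 →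
      0 < (1 + z * deriv (deriv f) z / deriv f z).re := by
  intro z hz
  have hz1 : ‖z‖ < 1 := by linarith
  have hznb : z ∈ ball (0:ℂ) 1 := by simpa [mem_ball, Complex.dist_eq] using hz1
  have hfN : AnalyticOnNhd ℂ f (ball (0:ℂ) 1) :=
    (Metric.isOpen_ball.analyticOn_iff_analyticOnNhd).1 hf
  have hdf : AnalyticOnNhd ℂ (deriv f) (ball (0:ℂ) 1) := hfN.deriv
  set g : ℂ → ℂ := fun w => deriv f w - 1 with hg_def
  have hgd : DifferentiableOn ℂ g (ball 0 1) :=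
    (hdf.differentiableOn).sub (differentiableOn_const 1)
  have hgm : MapsTo g (ball (0:ℂ) 1) (ball (0:ℂ) 1) := fun w hw => by
    simpa [mem_ball, Complex.dist_eq, hg_def] using
      hbound w (by simpa [mem_ball, Complex.dist_eq] using hw)
  have hg0 : g 0 = 0 := by simp [hg_def, hf1]
  -- Schwarz: |g z| ≤ |z|
  have hgz_le : ‖g z‖ ≤ ‖z‖ :=
    Complex.norm_le_norm_of_mapsTo_ball hgd (hgm.mono_right ball_subset_closedBall) hg0 hz1
  -- Schwarz-Pick
  have hsp := schwarz_pick hgd hgm hz1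
  -- deriv g = deriv (deriv f)
  have hderiv_g : deriv g z = deriv (deriv f) z := by
    simp only [hg_def]
    rw [deriv_sub_const]
  have hfz : deriv f z = 1 + g z := by simp [hg_def]
  set r := ‖z‖ with hr
  set s := ‖g z‖ with hs
  set d := ‖deriv g z‖ with hd
  have hr0 : 0 ≤ r := norm_nonneg z
  have hs0 : 0 ≤ s := norm_nonneg _
  have hd0 : 0 ≤ d := norm_nonneg _
  have hs1 : s < 1 := by
    have := hgm hznb; simpa [mem_ball, Complex.dist_eq, hs] using this
  -- |deriv f z| ≥ 1 - s > 0
  have hfz_abs : 1 - s ≤ ‖deriv f z‖ := by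
    rw [hfz]
    have h := norm_sub_le (1 + g z) (g z)
    simp only [add_sub_cancel_right, norm_one] at h
    rw [hs]; linarith
  have hA0 : (0:ℝ) < ‖deriv f z‖ := lt_of_lt_of_le (by linarith) hfz_abs
  have hfne : deriv f z ≠ 0 := fun h => by rw [h] at hA0; simp at hA0
  have hrd : r * d < 1 - s := by nlinarith [mul_le_mul_of_nonneg_left hsp hr0]
  set w := z * deriv (deriv f) z / deriv f z with hw_def
  have hw_abs : ‖w‖ < 1 := by
    rw [hw_def, norm_div, norm_mul, ← hderiv_g, ← hr, ← hd, div_lt_one hA0]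
    linarith
  simp only [Complex.add_re, Complex.one_re]
  have h1 : |w.re| ≤ ‖w‖ := Complex.abs_re_le_norm w
  have h2 := (abs_le.mp h1).1
  linarith
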